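/- Let (A, ≻, ≺) be a finite-dimensional anti-dendriform algebra and r ∈ A⊗A with r + τ(r) invariant. Then r is a solution of the anti-dendriform Yang-Baxter equation if and only if the operations ζ ≻_r η = -R_·*(T_r(ζ))η - L_≺*(T_{τ(r)}(η))ζ and ζ ≺_r η = R_≻*(T_r(ζ))η + L_·*(T_{τ(r)}(η))ζ make A* into an anti-dendriform algebra such that both T_r and -T_{τ(r)} are anti-dendriform algebra homomorphisms from (A*, ≻_r, ≺_r) to (A, ≻, ≺). -/

import Mathlib

open TensorProduct

set_option synthInstance.maxHeartbeats 1000000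
set_option maxHeartbeats 1600000

variable {K : Type*} [Field K]

/-- The anti-dendriform algebra identities for two bilinear operations `s` (≻) and `p` (≺):
`x≻(y≻z) = -(x·y)≻z = -x≺(y·z) = (x≺y)≺z` and `(x≻y)≺z = x≻(y≺z)`, where `x·y = x≻y + x≺y`. -/
def IsAntiDend {M : Type*} [AddCommGroup M] [Module K M]
    (s p : M →ₗ[K] M →ₗ[K] M) : Prop :=
  ∀ x y z : M,
    s x (s y z) = - s (s x y + p x y) z ∧
    s x (s y z) = - p x (s y z + p y z) ∧
    s x (s y z) = p (p x y) z ∧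
    p (s x y) z = s x (p y z)

/-- The bilinear map `a ⊗ b ↦ (ζ ↦ ζ(a) • b)` used to define `T_r`. -/
noncomputable def Tbil {M : Type*} [AddCommGroup M] [Module K M] :
    M →ₗ[K] M →ₗ[K] (Module.Dual K M →ₗ[K] M) :=
  LinearMap.mk₂ K (fun a b => (Module.Dual.eval K M a).smulRight b)
    (fun a a' b => by ext ζ; simp [add_smul])
    (fun c a b => by
      ext ζ
      simp only [LinearMap.smulRight_apply, LinearMap.smul_apply, map_smul,
        Module.Dual.eval_apply, smul_eq_mul, mul_smul])
    (fun a b b' => by ext ζ; simp)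
    (fun c a b => by
      ext ζ
      simp only [LinearMap.smulRight_apply, LinearMap.smul_apply]
      exact smul_comm _ _ _)

/-- `T_r : A* → A`, `⟨T_r ζ, η⟩ = ⟨r, ζ ⊗ η⟩`; concretely `T_r ζ = Σ ζ(aᵢ) • bᵢ`
for `r = Σ aᵢ ⊗ bᵢ`. -/
noncomputable def TmL {M : Type*} [AddCommGroup M] [Module K M] (r : M ⊗[K] M) :
    Module.Dual K M →ₗ[K] M :=
  TensorProduct.lift Tbil r

/-- The flip `τ : A ⊗ A → A ⊗ A`. -/
noncomputable def tau {M : Type*} [AddCommGroup M] [Module K M] (r : M ⊗[K] M) : M ⊗[K] M :=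
  TensorProduct.comm K M M r

/-- `r` is invariant: `(R_≺(x)⊗I + I⊗L_·(x)) r = 0` and `(R_·(x)⊗I + I⊗L_≻(x)) r = 0`. -/
def Invariant {M : Type*} [AddCommGroup M] [Module K M]
    (s p : M →ₗ[K] M →ₗ[K] M) (r : M ⊗[K] M) : Prop :=
  ∀ x : M,
    TensorProduct.map (p.flip x) (LinearMap.id : M →ₗ[K] M) r
      + TensorProduct.map (LinearMap.id : M →ₗ[K] M) ((s + p) x) r = 0 ∧
    TensorProduct.map ((s + p).flip x) (LinearMap.id : M →ₗ[K] M) r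
      + TensorProduct.map (LinearMap.id : M →ₗ[K] M) (s x) r = 0

/-- `(a⊗b)⊗(c⊗d) ↦ (m a c) ⊗ b ⊗ d` : the product is placed in the first tensor slot,
giving `r₁₂ ∗ r₁₃` when applied to `r ⊗ r`. -/
noncomputable def place1 {M : Type*} [AddCommGroup M] [Module K M]
    (m : M →ₗ[K] M →ₗ[K] M) :
    (M ⊗[K] M) ⊗[K] (M ⊗[K] M) →ₗ[K] M ⊗[K] (M ⊗[K] M) :=
  (TensorProduct.map (TensorProduct.lift m)
      (LinearMap.id : M ⊗[K] M →ₗ[K] M ⊗[K] M)) ∘ₗ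
    (TensorProduct.tensorTensorTensorComm K M M M M).toLinearMap

/-- `(a⊗b)⊗(c⊗d) ↦ c ⊗ (m a d) ⊗ b` : the product in the second slot, giving `r₂₃ ∗ r₁₂`. -/
noncomputable def place2 {M : Type*} [AddCommGroup M] [Module K M]
    (m : M →ₗ[K] M →ₗ[K] M) :
    (M ⊗[K] M) ⊗[K] (M ⊗[K] M) →ₗ[K] M ⊗[K] (M ⊗[K] M) :=
  (TensorProduct.leftComm K M M M).toLinearMap ∘ₗ
  (TensorProduct.map (LinearMap.id : M →ₗ[K] M) (TensorProduct.comm K M M).toLinearMap) ∘ₗ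
  (TensorProduct.map (TensorProduct.lift m)
      (LinearMap.id : M ⊗[K] M →ₗ[K] M ⊗[K] M)) ∘ₗ
  (TensorProduct.tensorTensorTensorComm K M M M M).toLinearMap ∘ₗ
  (TensorProduct.congr (LinearEquiv.refl K (M ⊗[K] M)) (TensorProduct.comm K M M)).toLinearMap

/-- `(a⊗b)⊗(c⊗d) ↦ a ⊗ c ⊗ (m b d)` : the product in the third slot, giving `r₁₃ ∗ r₂₃`. -/
noncomputable def place3 {M : Type*} [AddCommGroup M] [Module K M]
    (m : M →ₗ[K] M →ₗ[K] M) :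
    (M ⊗[K] M) ⊗[K] (M ⊗[K] M) →ₗ[K] M ⊗[K] (M ⊗[K] M) :=
  (TensorProduct.assoc K M M M).toLinearMap ∘ₗ
  (TensorProduct.map (LinearMap.id : M ⊗[K] M →ₗ[K] M ⊗[K] M) (TensorProduct.lift m)) ∘ₗ
  (TensorProduct.tensorTensorTensorComm K M M M M).toLinearMap

/-- `D(r) = r₁₂·r₁₃ + r₂₃≻r₁₂ - r₁₃≺r₂₃`. -/
noncomputable def adD {M : Type*} [AddCommGroup M] [Module K M]
    (s p : M →ₗ[K] M →ₗ[K] M) (r : M ⊗[K] M) : M ⊗[K] (M ⊗[K] M) :=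
  place1 (s + p) (r ⊗ₜ[K] r) + place2 s (r ⊗ₜ[K] r) - place3 p (r ⊗ₜ[K] r)

/-- `D₁(r) = r₂₃·r₁₂ + r₁₃≻r₂₃ + r₁₂≺r₁₃`. -/
noncomputable def adD1 {M : Type*} [AddCommGroup M] [Module K M]
    (s p : M →ₗ[K] M →ₗ[K] M) (r : M ⊗[K] M) : M ⊗[K] (M ⊗[K] M) :=
  place2 (s + p) (r ⊗ₜ[K] r) + place3 s (r ⊗ₜ[K] r) + place1 p (r ⊗ₜ[K] r)

/-- `D₂(r) = r₁₃·r₂₃ - r₁₂≻r₁₃ + r₂₃≺r₁₂`. -/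
noncomputable def adD2 {M : Type*} [AddCommGroup M] [Module K M]
    (s p : M →ₗ[K] M →ₗ[K] M) (r : M ⊗[K] M) : M ⊗[K] (M ⊗[K] M) :=
  place3 (s + p) (r ⊗ₜ[K] r) - place1 s (r ⊗ₜ[K] r) + place2 p (r ⊗ₜ[K] r)

/-- The anti-dendriform Yang-Baxter equation `D(r) = 0`. -/
noncomputable def AYBE {M : Type*} [AddCommGroup M] [Module K M]
    (s p : M →ₗ[K] M →ₗ[K] M) (r : M ⊗[K] M) : Prop :=
  adD s p r = 0

/-- `x ↦ R_m(x)* = (y ↦ m y x)*` on the dual space. -/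
noncomputable def RstarOp {M : Type*} [AddCommGroup M] [Module K M]
    (m : M →ₗ[K] M →ₗ[K] M) :
    M →ₗ[K] (Module.Dual K M →ₗ[K] Module.Dual K M) :=
  Module.Dual.transpose ∘ₗ m.flip

/-- `x ↦ L_m(x)* = (y ↦ m x y)*` on the dual space. -/
noncomputable def LstarOp {M : Type*} [AddCommGroup M] [Module K M]
    (m : M →ₗ[K] M →ₗ[K] M) :
    M →ₗ[K] (Module.Dual K M →ₗ[K] Module.Dual K M) :=
  Module.Dual.transpose ∘ₗ m

/-- `ζ ≻_r η = -R_·*(T_r ζ) η - L_≺*(T_{τ(r)} η) ζ`. -/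
noncomputable def succR {M : Type*} [AddCommGroup M] [Module K M]
    (s p : M →ₗ[K] M →ₗ[K] M) (r : M ⊗[K] M) :
    Module.Dual K M →ₗ[K] Module.Dual K M →ₗ[K] Module.Dual K M :=
  (RstarOp (s + p) ∘ₗ (- TmL r)) + (LstarOp p ∘ₗ (- TmL (tau r))).flip

/-- `ζ ≺_r η = R_≻*(T_r ζ) η + L_·*(T_{τ(r)} η) ζ`. -/
noncomputable def precR {M : Type*} [AddCommGroup M] [Module K M]
    (s p : M →ₗ[K] M →ₗ[K] M) (r : M ⊗[K] M) :
    Module.Dual K M →ₗ[K] Module.Dual K M →ₗ[K] Module.Dual K M :=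
  (RstarOp s ∘ₗ TmL r) + (LstarOp (s + p) ∘ₗ TmL (tau r)).flip

section AuxLemmas

variable {M : Type*} [AddCommGroup M] [Module K M]

lemma TmL_tmul (a b : M) (ξ : Module.Dual K M) :
    TmL (K := K) (a ⊗ₜ[K] b) ξ = ξ a • b := by
  simp [TmL, Tbil]

lemma TmL_add (u v : M ⊗[K] M) : TmL (K := K) (u + v) = TmL u + TmL v :=
  map_add (TensorProduct.lift Tbil) u v

lemma tau_tmul (a b : M) : tau (K := K) (a ⊗ₜ[K] b) = b ⊗ₜ[K] a := rfl

lemma tau_add (u v : M ⊗[K] M) : tau (K := K) (u + v) = tau u + tau v :=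
  map_add _ u v

lemma tau_tau (u : M ⊗[K] M) : tau (K := K) (tau u) = u := by
  induction u using TensorProduct.induction_on with
  | zero => simp [tau]
  | tmul a b => rfl
  | add x y hx hy => rw [tau_add, tau_add, hx, hy]

lemma TmL_adj (u : M ⊗[K] M) (ξ θ : Module.Dual K M) :
    θ (TmL (K := K) u ξ) = ξ (TmL (tau u) θ) := by
  induction u using TensorProduct.induction_on with
  | zero => simp [TmL, tau]
  | tmul a b => simp [TmL_tmul, tau_tmul, mul_comm]
  | add x y hx hy =>
      rw [TmL_add, tau_add, TmL_add, LinearMap.add_apply, LinearMap.add_apply,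
        map_add, map_add, hx, hy]

noncomputable def pair2 (ζ η : Module.Dual K M) : M ⊗[K] M →ₗ[K] K :=
  TensorProduct.lift (LinearMap.mk₂ K (fun a b => ζ a * η b)
    (fun a a' b => by simp [add_mul])
    (fun c a b => by simp [smul_eq_mul]; ring)
    (fun a b b' => by simp [mul_add])
    (fun c a b => by simp [smul_eq_mul]; ring))

lemma pair2_tmul (ζ η : Module.Dual K M) (a b : M) :
    pair2 ζ η (a ⊗ₜ[K] b) = ζ a * η b := by
  simp [pair2]

noncomputable def pair3 (ζ η θ : Module.Dual K M) : M ⊗[K] (M ⊗[K] M) →ₗ[K] K :=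
  TensorProduct.lift (LinearMap.mk₂ K (fun a t => ζ a * pair2 η θ t)
    (fun a a' b => by simp [add_mul])
    (fun c a b => by simp [smul_eq_mul]; ring)
    (fun a b b' => by simp [mul_add])
    (fun c a b => by simp [smul_eq_mul]; ring))

lemma pair3_tmul (ζ η θ : Module.Dual K M) (a : M) (t : M ⊗[K] M) :
    pair3 ζ η θ (a ⊗ₜ[K] t) = ζ a * pair2 η θ t := by
  simp [pair3]

lemma pair2_map (ζ η : Module.Dual K M) (f g : M →ₗ[K] M) (u : M ⊗[K] M) :
    pair2 ζ η (TensorProduct.map f g u) = pair2 (ζ ∘ₗ f) (η ∘ₗ g) u := by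
  induction u using TensorProduct.induction_on with
  | zero => simp
  | tmul a b => simp [pair2_tmul]
  | add x y hx hy => rw [map_add, map_add, map_add, hx, hy]

lemma pair2_eq_left (ζ η : Module.Dual K M) (u : M ⊗[K] M) :
    pair2 ζ η u = ζ (TmL (tau u) η) := by
  induction u using TensorProduct.induction_on with
  | zero => simp [tau, TmL]
  | tmul a b => simp [pair2_tmul, TmL_tmul, tau_tmul, mul_comm]
  | add x y hx hy =>
      rw [map_add, tau_add, TmL_add, LinearMap.add_apply, map_add, hx, hy]

lemma pair2_eq_right (ζ η : Module.Dual K M) (u : M ⊗[K] M) :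
    pair2 ζ η u = η (TmL u ζ) := by
  rw [pair2_eq_left, TmL_adj, tau_tau]

end AuxLemmas

section AuxLemmas2

variable {M : Type*} [AddCommGroup M] [Module K M]

lemma pairP1 (m : M →ₗ[K] M →ₗ[K] M) (u v : M ⊗[K] M) (ζ η θ : Module.Dual K M) :
    pair3 ζ η θ (place1 m (u ⊗ₜ[K] v)) = ζ (m (TmL (tau u) η) (TmL (tau v) θ)) := by
  induction u using TensorProduct.induction_on with
  | zero => simp [tau, TmL, TensorProduct.zero_tmul]
  | tmul a b =>
      induction v using TensorProduct.induction_on with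
      | zero => simp [tau, TmL, TensorProduct.tmul_zero]
      | tmul c d =>
          simp [place1, pair3_tmul, pair2_tmul, TmL_tmul, tau_tmul,
            TensorProduct.tensorTensorTensorComm_tmul]
          ring
      | add v1 v2 h1 h2 =>
          rw [TensorProduct.tmul_add, map_add, map_add, h1, h2, tau_add, TmL_add,
            LinearMap.add_apply, map_add, map_add]
  | add u1 u2 h1 h2 =>
      rw [TensorProduct.add_tmul, map_add, map_add, h1, h2, tau_add, TmL_add,
        LinearMap.add_apply, map_add, LinearMap.add_apply, map_add]

lemma pairP2 (m : M →ₗ[K] M →ₗ[K] M) (u v : M ⊗[K] M) (ζ η θ : Module.Dual K M) :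
    pair3 ζ η θ (place2 m (u ⊗ₜ[K] v)) = η (m (TmL (tau u) θ) (TmL v ζ)) := by
  induction u using TensorProduct.induction_on with
  | zero => simp [tau, TmL, TensorProduct.zero_tmul]
  | tmul a b =>
      induction v using TensorProduct.induction_on with
      | zero => simp [tau, TmL, TensorProduct.tmul_zero]
      | tmul c d =>
          simp only [place2, LinearMap.coe_comp, Function.comp_apply,
            LinearEquiv.coe_coe, TensorProduct.congr_tmul, LinearEquiv.refl_apply,
            TensorProduct.comm_tmul, TensorProduct.tensorTensorTensorComm_tmul,
            TensorProduct.map_tmul, TensorProduct.lift.tmul, LinearMap.id_coe, id_eq,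
            TensorProduct.leftComm_tmul, pair3_tmul, pair2_tmul, TmL_tmul, tau_tmul,
            map_smul, LinearMap.smul_apply, smul_eq_mul]
          ring
      | add v1 v2 h1 h2 =>
          rw [TensorProduct.tmul_add, map_add, map_add, h1, h2, TmL_add,
            LinearMap.add_apply, map_add, map_add]
  | add u1 u2 h1 h2 =>
      rw [TensorProduct.add_tmul, map_add, map_add, h1, h2, tau_add, TmL_add,
        LinearMap.add_apply, map_add, LinearMap.add_apply, map_add]

lemma pairP3 (m : M →ₗ[K] M →ₗ[K] M) (u v : M ⊗[K] M) (ζ η θ : Module.Dual K M) :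
    pair3 ζ η θ (place3 m (u ⊗ₜ[K] v)) = θ (m (TmL u ζ) (TmL v η)) := by
  induction u using TensorProduct.induction_on with
  | zero => simp [TmL, TensorProduct.zero_tmul]
  | tmul a b =>
      induction v using TensorProduct.induction_on with
      | zero => simp [TmL, TensorProduct.tmul_zero]
      | tmul c d =>
          simp [place3, pair3_tmul, pair2_tmul, TmL_tmul,
            TensorProduct.tensorTensorTensorComm_tmul]
          ring
      | add v1 v2 h1 h2 =>
          rw [TensorProduct.tmul_add, map_add, map_add, h1, h2, TmL_add,
            LinearMap.add_apply, map_add, map_add]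
  | add u1 u2 h1 h2 =>
      rw [TensorProduct.add_tmul, map_add, map_add, h1, h2, TmL_add,
        LinearMap.add_apply, map_add, LinearMap.add_apply, map_add]

lemma sep3 [Module.Finite K M] (z : M ⊗[K] (M ⊗[K] M))
    (hz : ∀ ζ η θ : Module.Dual K M, pair3 ζ η θ z = 0) : z = 0 := by
  classical
  let b := Module.finBasis K M
  let B := b.tensorProduct (b.tensorProduct b)
  have key : ∀ (w : M ⊗[K] (M ⊗[K] M)) (i j k),
      B.repr w (i, (j, k)) = pair3 (b.coord i) (b.coord j) (b.coord k) w := by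
    intro w i j k
    induction w using TensorProduct.induction_on with
    | zero => simp
    | tmul x t =>
        induction t using TensorProduct.induction_on with
        | zero => simp [TensorProduct.tmul_zero]
        | tmul y u =>
            simp [B, Module.Basis.tensorProduct_repr_tmul_apply, pair3_tmul, pair2_tmul,
              Module.Basis.coord_apply, smul_eq_mul]
            ring
        | add t1 t2 h1 h2 =>
            rw [TensorProduct.tmul_add, map_add, Finsupp.add_apply, h1, h2, map_add]
    | add w1 w2 h1 h2 =>
        rw [map_add, Finsupp.add_apply, h1, h2, map_add]
  have : B.repr z = 0 := by
    ext x
    obtain ⟨i, j, k⟩ := x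
    rw [key, hz, Finsupp.coe_zero, Pi.zero_apply]
  have := B.repr.injective (by rw [this, map_zero] : B.repr z = B.repr 0)
  exact this

lemma dual_ext' [Module.Finite K M] {a b : M}
    (hab : ∀ φ : Module.Dual K M, φ a = φ b) : a = b := by
  have h0 : ∀ φ : Module.Dual K M, φ (a - b) = 0 := by
    intro φ; rw [map_sub, hab φ, sub_self]
  have := (Module.forall_dual_apply_eq_zero_iff K (a - b)).mp h0
  exact sub_eq_zero.mp this

lemma succR_apply (s p : M →ₗ[K] M →ₗ[K] M) (r : M ⊗[K] M)
    (ζ η : Module.Dual K M) (x : M) :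
    succR s p r ζ η x
      = - η (s x (TmL r ζ)) - η (p x (TmL r ζ)) - ζ (p (TmL (tau r) η) x) := by
  simp [succR, RstarOp, LstarOp, Module.Dual.transpose_apply, LinearMap.flip_apply]
  ring

lemma precR_apply (s p : M →ₗ[K] M →ₗ[K] M) (r : M ⊗[K] M)
    (ζ η : Module.Dual K M) (x : M) :
    precR s p r ζ η x
      = η (s x (TmL r ζ)) + ζ (s (TmL (tau r) η) x) + ζ (p (TmL (tau r) η) x) := by
  simp [precR, RstarOp, LstarOp, Module.Dual.transpose_apply, LinearMap.flip_apply]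
  ring

end AuxLemmas2

variable {A : Type*} [AddCommGroup A] [Module K A]

/-- with `r + τ(r)` invariant, `r` solves the AD-YBE iff
`(A*, ≻_r, ≺_r)` is an anti-dendriform algebra and both `T_r` and `-T_{τ(r)}` are
anti-dendriform algebra homomorphisms from `(A*, ≻_r, ≺_r)` to `(A, ≻, ≺)`. -/
theorem stmt11 [FiniteDimensional K A]
    (s p : A →ₗ[K] A →ₗ[K] A) (h : IsAntiDend s p) (r : A ⊗[K] A)
    (hinv : Invariant s p (r + tau r)) :
    AYBE s p r ↔
      (IsAntiDend (succR s p r) (precR s p r) ∧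
        (∀ ζ η : Module.Dual K A,
          TmL r (succR s p r ζ η) = s (TmL r ζ) (TmL r η) ∧
          TmL r (precR s p r ζ η) = p (TmL r ζ) (TmL r η)) ∧
        (∀ ζ η : Module.Dual K A,
          - TmL (tau r) (succR s p r ζ η) = s (- TmL (tau r) ζ) (- TmL (tau r) η) ∧
          - TmL (tau r) (precR s p r ζ η) = p (- TmL (tau r) ζ) (- TmL (tau r) η))) := by
  classical
  -- scalar forms of the anti-dendriform identities on A
  have h1' : ∀ (φ : Module.Dual K A) (a b c : A),
      φ (s a (s b c)) + φ (s (s a b) c) + φ (s (p a b) c) = 0 := by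
    intro φ a b c
    have e := congrArg φ (h a b c).1
    simp only [map_add, map_neg, LinearMap.add_apply] at e
    linear_combination e
  have h2' : ∀ (φ : Module.Dual K A) (a b c : A),
      φ (s a (s b c)) + φ (p a (s b c)) + φ (p a (p b c)) = 0 := by
    intro φ a b c
    have e := congrArg φ (h a b c).2.1
    simp only [map_add, map_neg, LinearMap.add_apply] at e
    linear_combination e
  have h3' : ∀ (φ : Module.Dual K A) (a b c : A),
      φ (s a (s b c)) = φ (p (p a b) c) := fun φ a b c => congrArg φ (h a b c).2.2.1
  have h4' : ∀ (φ : Module.Dual K A) (a b c : A),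
      φ (p (s a b) c) = φ (s a (p b c)) := fun φ a b c => congrArg φ (h a b c).2.2.2
  -- scalar forms of the invariance of r + τ(r)
  have I1a : ∀ (x : A) (ζ η : Module.Dual K A),
      ζ (p (TmL r η) x) + ζ (p (TmL (tau r) η) x)
        + η (s x (TmL r ζ)) + η (p x (TmL r ζ))
        + η (s x (TmL (tau r) ζ)) + η (p x (TmL (tau r) ζ)) = 0 := by
    intro x ζ η
    have e := congrArg (pair2 ζ η) (hinv x).1
    rw [map_add, map_zero, pair2_map, pair2_map, pair2_eq_left, pair2_eq_right,
      tau_add, tau_tau] at e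
    simp only [TmL_add, LinearMap.add_apply, LinearMap.comp_id, LinearMap.coe_comp,
      Function.comp_apply, LinearMap.flip_apply, map_add] at e
    linear_combination e
  have I2a : ∀ (x : A) (ζ η : Module.Dual K A),
      ζ (s (TmL r η) x) + ζ (s (TmL (tau r) η) x)
        + ζ (p (TmL r η) x) + ζ (p (TmL (tau r) η) x)
        + η (s x (TmL r ζ)) + η (s x (TmL (tau r) ζ)) = 0 := by
    intro x ζ η
    have e := congrArg (pair2 ζ η) (hinv x).2
    rw [map_add, map_zero, pair2_map, pair2_map, pair2_eq_left, pair2_eq_right,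
      tau_add, tau_tau] at e
    simp only [TmL_add, LinearMap.add_apply, LinearMap.comp_id, LinearMap.coe_comp,
      Function.comp_apply, LinearMap.flip_apply, map_add] at e
    linear_combination e
  have I3a : ∀ (x : A) (ζ η : Module.Dual K A),
      ζ (s (TmL r η) x) + ζ (s (TmL (tau r) η) x)
        - η (p x (TmL r ζ)) - η (p x (TmL (tau r) ζ)) = 0 := by
    intro x ζ η
    linear_combination I2a x ζ η - I1a x ζ η
  constructor
  · -- forward direction
    intro hy
    have hy' : adD s p r = 0 := hy
    have YBa : ∀ ζ η θ : Module.Dual K A,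
        ζ (s (TmL (tau r) η) (TmL (tau r) θ)) + ζ (p (TmL (tau r) η) (TmL (tau r) θ))
          + η (s (TmL (tau r) θ) (TmL r ζ)) - θ (p (TmL r ζ) (TmL r η)) = 0 := by
      intro ζ η θ
      have e := congrArg (pair3 ζ η θ) hy'
      simp only [adD, map_add, map_sub, map_zero] at e
      rw [pairP1, pairP2, pairP3] at e
      simp only [LinearMap.add_apply, map_add] at e
      linear_combination e
    have hH1 : ∀ ζ η : Module.Dual K A,
        TmL r (precR s p r ζ η) = p (TmL r ζ) (TmL r η) := by
      intro ζ η
      apply dual_ext' (K := K)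
      intro θ
      rw [TmL_adj, precR_apply]
      linear_combination YBa ζ η θ
    have hH2 : ∀ ζ η : Module.Dual K A,
        TmL r (succR s p r ζ η) = s (TmL r ζ) (TmL r η) := by
      intro ζ η
      apply dual_ext' (K := K)
      intro θ
      rw [TmL_adj, succR_apply]
      linear_combination (- I1a (TmL (tau r) θ) ζ η) + YBa η θ ζ - I3a (TmL r η) θ ζ
    have hH3 : ∀ ζ η : Module.Dual K A,
        TmL (tau r) (precR s p r ζ η) = - p (TmL (tau r) ζ) (TmL (tau r) η) := by
      intro ζ η
      apply dual_ext' (K := K)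
      intro θ
      rw [TmL_adj, tau_tau, precR_apply, map_neg]
      linear_combination (I1a (TmL (tau r) η) θ ζ) + I3a (TmL r ζ) η θ - YBa ζ η θ
    have hH4 : ∀ ζ η : Module.Dual K A,
        TmL (tau r) (succR s p r ζ η) = - s (TmL (tau r) ζ) (TmL (tau r) η) := by
      intro ζ η
      apply dual_ext' (K := K)
      intro θ
      rw [TmL_adj, tau_tau, succR_apply, map_neg]
      linear_combination (I1a (TmL (tau r) θ) ζ η) - YBa η θ ζ + I3a (TmL r η) θ ζ
        + I3a (TmL (tau r) η) θ ζ - I2a (TmL r ζ) η θ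
    have hAD : IsAntiDend (succR s p r) (precR s p r) := by
      intro ζ η θ
      refine ⟨?_, ?_, ?_, ?_⟩
      · apply LinearMap.ext
        intro x
        simp only [map_add, map_neg, LinearMap.add_apply, LinearMap.neg_apply,
          succR_apply, precR_apply, hH1, hH2, hH3, hH4, map_sub, neg_neg]
        linear_combination (h1' θ x (TmL r ζ) (TmL r η)) + (h4' θ x (TmL r ζ) (TmL r η))
          - (h3' θ x (TmL r ζ) (TmL r η)) - (h2' θ x (TmL r ζ) (TmL r η))
          + (h2' η (TmL (tau r) θ) x (TmL r ζ)) - (h3' η (TmL (tau r) θ) x (TmL r ζ))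
          + (h4' ζ (TmL (tau r) η) (TmL (tau r) θ) x)
      · apply LinearMap.ext
        intro x
        simp only [map_add, map_neg, LinearMap.add_apply, LinearMap.neg_apply,
          succR_apply, precR_apply, hH1, hH2, hH3, hH4, map_sub, neg_neg]
        linear_combination (h1' θ x (TmL r ζ) (TmL r η)) - (h3' θ x (TmL r ζ) (TmL r η))
          + (h2' η (TmL (tau r) θ) x (TmL r ζ))
          - (h1' ζ (TmL (tau r) η) (TmL (tau r) θ) x)
          + (h3' ζ (TmL (tau r) η) (TmL (tau r) θ) x)
      · apply LinearMap.ext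
        intro x
        simp only [map_add, map_neg, LinearMap.add_apply, LinearMap.neg_apply,
          succR_apply, precR_apply, hH1, hH2, hH3, hH4, map_sub, neg_neg]
        linear_combination (h1' θ x (TmL r ζ) (TmL r η)) + (h4' θ x (TmL r ζ) (TmL r η))
          - (h3' θ x (TmL r ζ) (TmL r η))
          + (h2' η (TmL (tau r) θ) x (TmL r ζ)) - (h1' η (TmL (tau r) θ) x (TmL r ζ))
          + (h4' ζ (TmL (tau r) η) (TmL (tau r) θ) x)
          - (h2' ζ (TmL (tau r) η) (TmL (tau r) θ) x)
      · apply LinearMap.ext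
        intro x
        simp only [map_add, map_neg, LinearMap.add_apply, LinearMap.neg_apply,
          succR_apply, precR_apply, hH1, hH2, hH3, hH4, map_sub, neg_neg]
        linear_combination (h1' θ x (TmL r ζ) (TmL r η))
          - (h1' η (TmL (tau r) θ) x (TmL r ζ)) - (h4' η (TmL (tau r) θ) x (TmL r ζ))
          + (h3' η (TmL (tau r) θ) x (TmL r ζ)) + (h2' η (TmL (tau r) θ) x (TmL r ζ))
          - (h2' ζ (TmL (tau r) η) (TmL (tau r) θ) x)
          + (h3' ζ (TmL (tau r) η) (TmL (tau r) θ) x)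
    refine ⟨hAD, fun ζ η => ⟨hH2 ζ η, hH1 ζ η⟩, fun ζ η => ⟨?_, ?_⟩⟩
    · rw [hH4 ζ η]; simp
    · rw [hH3 ζ η]; simp
  · -- backward direction
    rintro ⟨-, hhom, -⟩
    show adD s p r = 0
    apply sep3 (K := K)
    intro ζ η θ
    simp only [adD, map_add, map_sub]
    rw [pairP1, pairP2, pairP3]
    simp only [LinearMap.add_apply, map_add]
    have e : θ (TmL r (precR s p r ζ η)) = θ (p (TmL r ζ) (TmL r η)) := by
      rw [(hhom ζ η).2]
    rw [TmL_adj, precR_apply] at e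
    linear_combination e
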